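/- arXiv:1501.01842 — 6 statements merged into one kernel-verified Lean document; each statement's English description precedes it below -/
import Mathlib

section
/- Let N be a zero symmetric near-ring and Γ an N-group of type 1, and let S = Aut_N(Γ) be the group of N-automorphisms of Γ. Then there exists a set X of representatives of the equivalence relation ∼ (where γ₁ ∼ γ₂ iff nγ₁ = nγ₂ for all n ∈ N) such that S(X) ⊆ X and 0 ∈ X. -/
/-- Lemma 1: For a zero symmetric near-ring `N` and an `N`-group
`Γ` of type 1, there is a set of representatives `X` of `∼` with `S(X) ⊆ X`
(for `S = Aut_N(Γ)`) and `0 ∈ X`. -/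
theorem stmt_6 {N Γ : Type*} [AddGroup N] [Mul N] [AddGroup Γ] [SMul N Γ]
    (hmul_assoc : ∀ a b c : N, a * b * c = a * (b * c))
    (hrdistrib : ∀ a b c : N, (a + b) * c = a * c + b * c)
    (hzs : ∀ n : N, n * 0 = 0)
    (hact_add : ∀ (m n : N) (γ : Γ), (m + n) • γ = m • γ + n • γ)
    (hact_mul : ∀ (m n : N) (γ : Γ), (m * n) • γ = m • (n • γ))
    -- Γ is an N-group of type 1:
    (hne : ∃ γ : Γ, γ ≠ 0)
    (hideals : ∀ I : AddSubgroup Γ, I.Normal →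
      (∀ (n : N) (γ : Γ), ∀ i ∈ I, n • (γ + i) - n • γ ∈ I) → I = ⊥ ∨ I = ⊤)
    (hgen : ∃ γ₀ : Γ, ∀ δ : Γ, ∃ n : N, n • γ₀ = δ)
    (htype1 : ∀ γ : Γ, (∀ δ : Γ, ∃ n : N, n • γ = δ) ∨ (∀ n : N, n • γ = 0)) :
    ∃ X : Set Γ,
      -- X is a set of representatives of ∼ : every element of Γ is equivalent
      -- to some element of X, and distinct elements of X are inequivalent
      (∀ γ : Γ, ∃ x ∈ X, ∀ n : N, n • x = n • γ) ∧
      (∀ x ∈ X, ∀ y ∈ X, (∀ n : N, n • x = n • y) → x = y) ∧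
      -- X is invariant under every N-automorphism of Γ
      (∀ s : Γ ≃+ Γ, (∀ (n : N) (δ : Γ), s (n • δ) = n • s δ) →
        ∀ x ∈ X, s x ∈ X) ∧
      (0 : Γ) ∈ X := by
  classical
  have hzero_smul : ∀ γ : Γ, (0 : N) • γ = 0 := by
    intro γ
    have h := hact_add 0 0 γ
    rw [add_zero] at h
    have h2 : (0:N) • γ + 0 = (0:N) • γ + (0:N) • γ := by rw [add_zero]; exact h
    exact (add_left_cancel h2).symm
  have hsmul_zero : ∀ n : N, n • (0 : Γ) = 0 := by
    intro n
    calc n • (0:Γ) = n • ((0:N) • (0:Γ)) := by rw [hzero_smul]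
      _ = (n * 0) • (0:Γ) := (hact_mul _ _ _).symm
      _ = (0:N) • (0:Γ) := by rw [hzs]
      _ = 0 := hzero_smul _
  have hsymmA : ∀ s : Γ ≃+ Γ, (∀ (n:N) (d:Γ), s (n • d) = n • s d) →
      ∀ (n:N) (d:Γ), s.symm (n • d) = n • s.symm d := by
    intro s hs n d
    apply s.injective
    rw [s.apply_symm_apply, hs, s.apply_symm_apply]
  -- the coarser relation R
  have hequiv : Equivalence (fun γ δ : Γ => ∃ s : Γ ≃+ Γ,
      (∀ (n:N) (d:Γ), s (n • d) = n • s d) ∧ ∀ n : N, n • s γ = n • δ) := by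
    constructor
    · intro γ
      exact ⟨AddEquiv.refl Γ, fun n d => rfl, fun n => rfl⟩
    · rintro γ δ ⟨s, hs, h⟩
      refine ⟨s.symm, hsymmA s hs, fun n => ?_⟩
      calc n • s.symm δ = s.symm (n • δ) := (hsymmA s hs n δ).symm
        _ = s.symm (n • s γ) := by rw [h n]
        _ = n • s.symm (s γ) := hsymmA s hs n (s γ)
        _ = n • γ := by rw [s.symm_apply_apply]
    · rintro γ δ ε ⟨s, hs, h1⟩ ⟨t, ht, h2⟩
      refine ⟨s.trans t, fun n d => ?_, fun n => ?_⟩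
      · show t (s (n • d)) = n • t (s d)
        rw [hs, ht]
      · show n • t (s γ) = n • ε
        calc n • t (s γ) = t (n • s γ) := (ht n (s γ)).symm
          _ = t (n • δ) := by rw [h1 n]
          _ = n • t δ := ht n δ
          _ = n • ε := h2 n
  let r : Setoid Γ := ⟨_, hequiv⟩
  let c : Γ → Γ := fun γ => if r.r γ 0 then 0 else (Quotient.mk r γ).out
  have hc_const : ∀ γ δ : Γ, r.r γ δ → c γ = c δ := by
    intro γ δ h
    by_cases h0 : r.r γ 0
    · have h0' : r.r δ 0 := r.trans (r.symm h) h0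
      simp only [c, if_pos h0, if_pos h0']
    · have h0' : ¬ r.r δ 0 := fun hd => h0 (r.trans h hd)
      have hq : Quotient.mk r γ = Quotient.mk r δ := Quotient.sound h
      simp only [c, if_neg h0, if_neg h0', hq]
  have hc_rel : ∀ γ : Γ, r.r (c γ) γ := by
    intro γ
    by_cases h0 : r.r γ 0
    · simpa only [c, if_pos h0] using r.symm h0
    · simpa only [c, if_neg h0] using Quotient.mk_out (s := r) γ
  have hc0 : c 0 = 0 := by
    show (if r.r 0 0 then 0 else (Quotient.mk r 0).out) = 0
    exact if_pos (r.refl 0)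
  refine ⟨{x | ∃ s : Γ ≃+ Γ,
      (∀ (n:N) (d:Γ), s (n • d) = n • s d) ∧ s (c x) = x}, ?_, ?_, ?_, ?_⟩
  · -- every γ is ∼-equivalent to some x ∈ X
    intro γ
    obtain ⟨s, hs, h⟩ := hc_rel γ
    refine ⟨s (c γ), ?_, h⟩
    have hxγ : r.r (s (c γ)) γ := ⟨AddEquiv.refl Γ, fun n d => rfl, fun n => h n⟩
    have : c (s (c γ)) = c γ := hc_const _ _ hxγ
    exact ⟨s, hs, by rw [this]⟩
  · -- distinct elements of X are inequivalent
    rintro x ⟨s, hs, hx⟩ y ⟨t, ht, hy⟩ hxy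
    have hrxy : r.r x y := ⟨AddEquiv.refl Γ, fun n d => rfl, fun n => hxy n⟩
    have hcc : c x = c y := hc_const _ _ hrxy
    set a := c x with ha
    -- u := t.symm ∘ s satisfies n • u a = n • a
    have hua : ∀ n : N, n • t.symm (s a) = n • a := by
      intro n
      calc n • t.symm (s a) = t.symm (n • s a) := (hsymmA t ht n (s a)).symm
        _ = t.symm (n • x) := by rw [hx]
        _ = t.symm (n • y) := by rw [hxy n]
        _ = n • t.symm y := hsymmA t ht n y
        _ = n • t.symm (t (c y)) := by rw [hy]
        _ = n • a := by rw [t.symm_apply_apply, ← hcc]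
    rcases htype1 a with hgen' | hann
    · -- a is generating : u a = a, hence x = y
      obtain ⟨n, hn⟩ := hgen' a
      have : t.symm (s a) = a := by
        calc t.symm (s a) = t.symm (s (n • a)) := by rw [hn]
          _ = n • t.symm (s a) := by rw [hs, hsymmA t ht]
          _ = n • a := hua n
          _ = a := hn
      have hsa : s a = t a := by
        have := congrArg t this
        rwa [t.apply_symm_apply] at this
      rw [← hx, ← hy, ← hcc]; exact hsa
    · -- a is annihilated : everything collapses to 0
      have hx0 : ∀ n : N, n • x = 0 := by
        intro n
        calc n • x = n • s a := by rw [hx]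
          _ = s (n • a) := (hs n a).symm
          _ = s 0 := by rw [hann n]
          _ = 0 := s.map_zero
      have hrx0 : r.r x 0 := ⟨AddEquiv.refl Γ, fun n d => rfl,
        fun n => by show n • x = n • (0:Γ); rw [hx0 n, hsmul_zero]⟩
      have ha0 : a = 0 := by rw [ha, hc_const _ _ hrx0, hc0]
      have hxx : x = 0 := by rw [← hx, ha0, s.map_zero]
      have hyy : y = 0 := by rw [← hy, ← hcc, ha0, t.map_zero]
      rw [hxx, hyy]
  · -- X is invariant under N-automorphisms
    rintro s hs x ⟨t, ht, hx⟩
    have hr : r.r (s x) x := ⟨s.symm, hsymmA s hs,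
      fun n => by rw [s.symm_apply_apply]⟩
    have hcc : c (s x) = c x := hc_const _ _ hr
    refine ⟨t.trans s, fun n d => ?_, ?_⟩
    · show s (t (n • d)) = n • s (t d)
      rw [ht, hs]
    · show s (t (c (s x))) = s x
      rw [hcc, hx]
  · -- 0 ∈ X
    exact ⟨AddEquiv.refl Γ, fun n d => rfl, by simp [hc0]⟩
end

section
/- Let N be a zero symmetric near-ring with a faithful N-group Γ, S = Aut_N(Γ), and X = X₁ ∪ {0} an S-invariant set of representatives of ∼ with φ : Γ → X the representative map. For n ∈ N define f_n : X → Γ, x ↦ nx. Then the map h : N → M₀(X,Γ,φ,S), n ↦ f_n, is an injective near-ring homomorphism (where M₀(X,Γ,φ,S) carries pointwise addition and sandwich multiplication f ∘' g = f ∘ φ ∘ g). -/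
/-- The sandwich multiplication `f ∘' g = f ∘ φ ∘ g` on functions `X → Γ`. -/
def sandwichMul {Γ : Type*} {X : Set Γ} (φ : Γ → Γ) (hφX : ∀ γ : Γ, φ γ ∈ X)
    (f g : X → Γ) : X → Γ :=
  fun x => f ⟨φ (g x), hφX (g x)⟩

/-- The map `h : n ↦ f_n` with `f_n : X → Γ, x ↦ nx` is an
injective near-ring homomorphism from `N` into the sandwich centralizer
near-ring `M₀(X,Γ,φ,S)`, `S = Aut_N(Γ)`. -/
theorem stmt_10 {N Γ : Type*} [AddGroup N] [Mul N] [AddGroup Γ] [SMul N Γ]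
    (hmul_assoc : ∀ a b c : N, a * b * c = a * (b * c))
    (hrdistrib : ∀ a b c : N, (a + b) * c = a * c + b * c)
    (hzs : ∀ n : N, n * 0 = 0)
    (hact_add : ∀ (m n : N) (γ : Γ), (m + n) • γ = m • γ + n • γ)
    (hact_mul : ∀ (m n : N) (γ : Γ), (m * n) • γ = m • (n • γ))
    -- Γ is faithful:
    (hfaithful : ∀ n : N, (∀ γ : Γ, n • γ = 0) → n = 0)
    -- X = X₁ ∪ {0} is an S-invariant set of representatives of ∼, S = Aut_N(Γ):
    (X : Set Γ) (h0X : (0 : Γ) ∈ X)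
    (hrepex : ∀ γ : Γ, ∃ x ∈ X, ∀ n : N, n • x = n • γ)
    (hrep : ∀ x ∈ X, ∀ y ∈ X, (∀ n : N, n • x = n • y) → x = y)
    (hSX : ∀ s : Γ ≃+ Γ, (∀ (n : N) (δ : Γ), s (n • δ) = n • s δ) → ∀ x ∈ X, s x ∈ X)
    -- φ is the representative map of ∼:
    (φ : Γ → Γ) (hφX : ∀ γ : Γ, φ γ ∈ X)
    (hφsim : ∀ (γ : Γ) (n : N), n • φ γ = n • γ) :
    -- h n := f_n lands in M₀(X,Γ,φ,S):
    (∀ n : N, (fun x : X => n • (x : Γ)) ⟨0, h0X⟩ = 0 ∧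
      ∀ s : Γ ≃+ Γ, ∀ hs : (∀ (m : N) (δ : Γ), s (m • δ) = m • s δ), ∀ x : X,
        (fun x : X => n • (x : Γ)) ⟨s x, hSX s hs x x.2⟩
          = s ((fun x : X => n • (x : Γ)) x)) ∧
    -- h is additive:
    (∀ m n : N, (fun x : X => (m + n) • (x : Γ))
      = (fun x : X => m • (x : Γ)) + (fun x : X => n • (x : Γ))) ∧
    -- h is multiplicative w.r.t. the sandwich multiplication:
    (∀ m n : N, (fun x : X => (m * n) • (x : Γ))
      = sandwichMul φ hφX (fun x : X => m • (x : Γ)) (fun x : X => n • (x : Γ))) ∧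
    -- h is injective:
    (∀ m n : N, (fun x : X => m • (x : Γ)) = (fun x : X => n • (x : Γ)) → m = n) := by
  have hzero_smul : ∀ γ : Γ, (0 : N) • γ = 0 := by
    intro γ
    have := hact_add 0 0 γ
    simpa using (add_right_cancel (a := (0:N) • γ) (b := (0:N) • γ) (c := 0) (by simpa using this.symm))
  have hsmul_zero : ∀ n : N, n • (0 : Γ) = 0 := by
    intro n
    calc n • (0 : Γ) = n • ((0 : N) • (0 : Γ)) := by rw [hzero_smul]
    _ = (n * 0) • (0 : Γ) := (hact_mul n 0 0).symm
    _ = (0 : N) • (0 : Γ) := by rw [hzs]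
    _ = 0 := hzero_smul 0
  have hneg : ∀ (n : N) (γ : Γ), (-n) • γ = -(n • γ) := by
    intro n γ
    have h := hact_add n (-n) γ
    rw [add_neg_cancel, hzero_smul] at h
    exact eq_neg_of_add_eq_zero_right h.symm
  refine ⟨fun n => ⟨hsmul_zero n, fun s hs x => (hs n x).symm⟩, fun m n => funext fun x => hact_add m n x,
    fun m n => funext fun x => by
      simp only [sandwichMul]
      rw [hact_mul, ← hφsim (n • (x : Γ)) m], ?_⟩
  intro m n h
  have := hfaithful (m + -n) (fun γ => by
    obtain ⟨x, hx, hxγ⟩ := hrepex γ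
    have hmx : m • (x : Γ) = n • (x : Γ) := congrFun h ⟨x, hx⟩
    rw [hact_add, hneg, ← hxγ, ← hxγ n, hmx, add_neg_cancel])
  have h2 := congrArg (· + n) this
  simpa [neg_add_cancel_right] using h2
end

section
/- Let N be a zero symmetric near-ring acting 1-primitively on a faithful N-group Γ of type 1, S = Aut_N(Γ), and let x₁, x₂ be generators of Γ (Nx₁ = Nx₂ = Γ) lying in an S-invariant representative set X₁ of ∼. If x₁ and x₂ have the same annihilator (0:x₁) = (0:x₂), then x₁ and x₂ lie in the same S-orbit. -/
/-- If two generators `x₁, x₂` in the representative set `X₁`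
have the same annihilator, then they lie in the same orbit of `S = Aut_N(Γ)`. -/
theorem stmt_11 {N Γ : Type*} [AddGroup N] [Mul N] [AddGroup Γ] [SMul N Γ]
    (hmul_assoc : ∀ a b c : N, a * b * c = a * (b * c))
    (hrdistrib : ∀ a b c : N, (a + b) * c = a * c + b * c)
    (hzs : ∀ n : N, n * 0 = 0)
    (hact_add : ∀ (m n : N) (γ : Γ), (m + n) • γ = m • γ + n • γ)
    (hact_mul : ∀ (m n : N) (γ : Γ), (m * n) • γ = m • (n • γ))
    -- Γ is a faithful N-group of type 1 on which N acts 1-primitively: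
    (hfaithful : ∀ n : N, (∀ γ : Γ, n • γ = 0) → n = 0)
    (hne : ∃ γ : Γ, γ ≠ 0)
    (hideals : ∀ I : AddSubgroup Γ, I.Normal →
      (∀ (n : N) (γ : Γ), ∀ i ∈ I, n • (γ + i) - n • γ ∈ I) → I = ⊥ ∨ I = ⊤)
    (hgen : ∃ γ₀ : Γ, ∀ δ : Γ, ∃ n : N, n • γ₀ = δ)
    (htype1 : ∀ γ : Γ, (∀ δ : Γ, ∃ n : N, n • γ = δ) ∨ (∀ n : N, n • γ = 0))
    -- X₁ is an S-invariant set of representatives of the ∼-classes of generators: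
    (X₁ : Set Γ) (hX₁gen : ∀ x ∈ X₁, ∀ δ : Γ, ∃ n : N, n • x = δ)
    (hrepex : ∀ γ : Γ, (∀ δ : Γ, ∃ n : N, n • γ = δ) → ∃ x ∈ X₁, ∀ n : N, n • x = n • γ)
    (hrep : ∀ x ∈ X₁, ∀ y ∈ X₁, (∀ n : N, n • x = n • y) → x = y)
    (hSX : ∀ s : Γ ≃+ Γ, (∀ (n : N) (δ : Γ), s (n • δ) = n • s δ) → ∀ x ∈ X₁, s x ∈ X₁)
    -- x₁, x₂ ∈ X₁ with the same annihilator: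
    (x₁ x₂ : Γ) (hx₁ : x₁ ∈ X₁) (hx₂ : x₂ ∈ X₁)
    (hann : ∀ n : N, n • x₁ = 0 ↔ n • x₂ = 0) :
    -- x₁ and x₂ lie in the same S-orbit:
    ∃ s : Γ ≃+ Γ, (∀ (n : N) (δ : Γ), s (n • δ) = n • s δ) ∧ s x₁ = x₂ := by
  -- basic facts about the action
  have hzero : ∀ γ : Γ, (0 : N) • γ = 0 := by
    intro γ
    have h := hact_add 0 0 γ
    rw [add_zero] at h
    nth_rewrite 1 [← add_zero ((0:N) • γ)] at h
    exact (add_left_cancel h).symm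
  have hneg : ∀ (n : N) (γ : Γ), (-n) • γ = -(n • γ) := by
    intro n γ
    have h := hact_add n (-n) γ
    rw [add_neg_cancel, hzero] at h
    exact (eq_neg_of_add_eq_zero_right h.symm)
  have hsub : ∀ (n m : N) (γ : Γ), (n - m) • γ = n • γ - m • γ := by
    intro n m γ
    rw [sub_eq_add_neg, hact_add, hneg, sub_eq_add_neg]
  -- elements acting equally on x₁ act equally on x₂, and conversely
  have eqx : ∀ n m : N, n • x₁ = m • x₁ → n • x₂ = m • x₂ := by
    intro n m h
    have h0 : (n - m) • x₁ = 0 := by rw [hsub, h, sub_self]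
    have h2 : (n - m) • x₂ = 0 := (hann _).mp h0
    rw [hsub] at h2
    exact sub_eq_zero.mp h2
  have eqx' : ∀ n m : N, n • x₂ = m • x₂ → n • x₁ = m • x₁ := by
    intro n m h
    have h0 : (n - m) • x₂ = 0 := by rw [hsub, h, sub_self]
    have h2 : (n - m) • x₁ = 0 := (hann _).mpr h0
    rw [hsub] at h2
    exact sub_eq_zero.mp h2
  -- choice functions
    -- c γ • x₁ = γ,  d γ • x₂ = γ
  choose c hc using hX₁gen x₁ hx₁
  choose d hd using hX₁gen x₂ hx₂
  set φ : Γ → Γ := fun γ => c γ • x₂ with hφdef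
  set ψ : Γ → Γ := fun γ => d γ • x₁ with hψdef
  have keyφ : ∀ n : N, φ (n • x₁) = n • x₂ := by
    intro n
    exact eqx _ _ (hc (n • x₁))
  have keyψ : ∀ n : N, ψ (n • x₂) = n • x₁ := by
    intro n
    exact eqx' _ _ (hd (n • x₂))
  have hψφ : ∀ γ : Γ, ψ (φ γ) = γ := by
    intro γ
    have : φ γ = c γ • x₂ := rfl
    rw [this, keyψ, hc]
  have hφψ : ∀ γ : Γ, φ (ψ γ) = γ := by
    intro γ
    have : ψ γ = d γ • x₁ := rfl
    rw [this, keyφ, hd]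
  have hadd : ∀ γ δ : Γ, φ (γ + δ) = φ γ + φ δ := by
    intro γ δ
    have h1 : (c γ + c δ) • x₁ = γ + δ := by rw [hact_add, hc, hc]
    have h2 : φ (γ + δ) = (c γ + c δ) • x₂ := by
      rw [← h1, keyφ]
    rw [h2, hact_add]
  set s : Γ ≃+ Γ :=
    { toFun := φ
      invFun := ψ
      left_inv := hψφ
      right_inv := hφψ
      map_add' := hadd } with hs
  have hlin : ∀ (n : N) (δ : Γ), s (n • δ) = n • s δ := by
    intro n δ
    have h1 : n • δ = (n * c δ) • x₁ := by rw [hact_mul, hc]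
    show φ (n • δ) = n • φ δ
    rw [h1, keyφ, hact_mul]

  refine ⟨s, hlin, ?_⟩
  have hmem : s x₁ ∈ X₁ := hSX s hlin x₁ hx₁
  apply hrep _ hmem _ hx₂
  intro n
  rw [← hlin n x₁]
  show φ (n • x₁) = n • x₂
  rw [keyφ]
end

section
/- Let (Γ,+) be a group, S ≤ Aut(Γ,+), and G ⊆ Γ \ {0} with S(G) ⊆ G and S acting without fixed points on G (s(g) = g with g ∈ G implies s = id). Let {e_i | i ∈ I} be a complete set of orbit representatives of S on G, let ∅ ≠ J ⊆ I, set X₁ := ∪_{j∈J} S(e_j), X := {0} ∪ X₁, K := I \ J, and let f : {e_k | k ∈ K} → X₁ be any function. Define φ : Γ → X by φ(γ) = 0 if γ ∉ G, φ(γ) = γ if γ ∈ X₁, and φ(s(e_k)) = s(f(e_k)) for k ∈ K, s ∈ S. Then φ is a well-defined function satisfying φ|_X = id and φ(s(γ)) = s(φ(γ)) for all γ ∈ Γ, s ∈ S; moreover S acts without fixed points on X₁ and S(X₁) ⊆ X₁. -/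
/-- Proposition on the construction of the sandwich function φ. -/
theorem stmt_12 {Γ : Type*} [AddGroup Γ] (S : AddSubgroup (AddAut Γ))
    (G : Set Γ) (hG0 : (0 : Γ) ∉ G)
    (hSG : ∀ s ∈ S, ∀ g ∈ G, s g ∈ G)
    (hfpfG : ∀ s ∈ S, ∀ g ∈ G, s g = g → s = 0)
    -- {e_i | i ∈ I} is a complete set of orbit representatives of S on G:
    {I : Type*} (e : I → Γ) (heG : ∀ i, e i ∈ G)
    (hcomplete : ∀ g ∈ G, ∃ i, ∃ s ∈ S, s (e i) = g)
    (hdistinct : ∀ i j : I, ∀ s ∈ S, s (e i) = e j → i = j)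
    -- ∅ ≠ J ⊆ I, X₁ := ∪_{j∈J} S(e_j), K := I \ J,
    -- f : {e_k | k ∈ K} → X₁ an arbitrary function:
    (J : Set I) (hJ : J.Nonempty)
    (f : I → Γ) (hf : ∀ k ∉ J, ∃ j ∈ J, ∃ s ∈ S, s (e j) = f k) :
    -- with X₁ = ∪_{j∈J} S(e_j) and X = {0} ∪ X₁, the function φ is well
    -- defined (it exists and satisfies its defining clauses) and has the
    -- asserted properties:
    ∃ φ : Γ → Γ,
      (∀ γ : Γ, γ ∉ G → φ γ = 0) ∧
      (∀ γ ∈ {γ : Γ | ∃ j ∈ J, ∃ s ∈ S, s (e j) = γ}, φ γ = γ) ∧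
      (∀ k ∉ J, ∀ s ∈ S, φ (s (e k)) = s (f k)) ∧
      -- φ maps Γ into X = {0} ∪ X₁:
      (∀ γ : Γ, φ γ ∈ insert (0 : Γ) {γ : Γ | ∃ j ∈ J, ∃ s ∈ S, s (e j) = γ}) ∧
      -- φ|_X = id:
      (∀ x ∈ insert (0 : Γ) {γ : Γ | ∃ j ∈ J, ∃ s ∈ S, s (e j) = γ}, φ x = x) ∧
      -- φ commutes with S:
      (∀ γ : Γ, ∀ s ∈ S, φ (s γ) = s (φ γ)) ∧
      -- S acts without fixed points on X₁:
      (∀ s ∈ S, ∀ x ∈ {γ : Γ | ∃ j ∈ J, ∃ s ∈ S, s (e j) = γ}, s x = x → s = 0) ∧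
      -- S(X₁) ⊆ X₁:
      (∀ s ∈ S, ∀ x ∈ {γ : Γ | ∃ j ∈ J, ∃ s ∈ S, s (e j) = γ},
        s x ∈ {γ : Γ | ∃ j ∈ J, ∃ s ∈ S, s (e j) = γ}) := by
  classical
  have uniq : ∀ (i j : I) (s t : AddAut Γ), s ∈ S → t ∈ S → s (e i) = t (e j) →
      i = j ∧ s = t := by
    intro i j s t hs ht h
    have h1 : (-t + s) (e i) = e j := by
      have := congrArg (⇑(-t)) h
      simpa using this
    have hmem : -t + s ∈ S := S.add_mem (S.neg_mem ht) hs
    have hij : i = j := hdistinct i j _ hmem h1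
    subst hij
    have hone : -t + s = 0 := hfpfG _ hmem _ (heG i) h1
    exact ⟨rfl, (neg_add_eq_zero.mp hone).symm⟩
  have spec : ∀ γ (h : γ ∈ G), ∃ s ∈ S, (s : AddAut Γ) (e ((hcomplete γ h).choose)) = γ :=
    fun γ h => (hcomplete γ h).choose_spec
  let aut : ∀ γ, γ ∈ G → AddAut Γ := fun γ h => (spec γ h).choose
  have autS : ∀ γ h, aut γ h ∈ S := fun γ h => (spec γ h).choose_spec.1
  have auteq : ∀ γ h, (aut γ h) (e ((hcomplete γ h).choose)) = γ :=
    fun γ h => (spec γ h).choose_spec.2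
  set φ : Γ → Γ := fun γ =>
    if h : γ ∈ G then
      (if (hcomplete γ h).choose ∈ J then γ else (aut γ h) (f ((hcomplete γ h).choose)))
    else 0 with hφ
  have main : ∀ (s : AddAut Γ), s ∈ S → ∀ i, φ (s (e i)) =
      if i ∈ J then s (e i) else s (f i) := by
    intro s hs i
    have hmem : s (e i) ∈ G := hSG s hs _ (heG i)
    have h1 := auteq _ hmem
    obtain ⟨hij, hst⟩ := uniq _ i _ s (autS _ hmem) hs h1
    simp only [hφ, dif_pos hmem]
    rw [hij, hst]
  have mainG : ∀ γ (h : γ ∈ G), ∃ (i : I) (t : AddAut Γ), t ∈ S ∧ t (e i) = γ ∧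
      φ γ = if i ∈ J then γ else t (f i) := by
    intro γ h
    refine ⟨(hcomplete γ h).choose, aut γ h, autS γ h, auteq γ h, ?_⟩
    have := main (aut γ h) (autS γ h) (hcomplete γ h).choose
    rw [auteq γ h] at this
    exact this
  have hX1G : ∀ x ∈ {γ : Γ | ∃ j ∈ J, ∃ s ∈ S, s (e j) = γ}, x ∈ G := by
    rintro x ⟨j, hj, s, hs, rfl⟩
    exact hSG s hs _ (heG j)
  have hnotG : ∀ γ, γ ∉ G → φ γ = 0 := fun γ h => by simp only [hφ, dif_neg h]
  have hX1id : ∀ γ ∈ {γ : Γ | ∃ j ∈ J, ∃ s ∈ S, s (e j) = γ}, φ γ = γ := by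
    rintro γ ⟨j, hj, s, hs, rfl⟩
    rw [main s hs j, if_pos hj]
  have hKf : ∀ k ∉ J, ∀ s ∈ S, φ (s (e k)) = s (f k) := by
    intro k hk s hs
    rw [main s hs k, if_neg hk]
  refine ⟨φ, hnotG, hX1id, hKf, ?_, ?_, ?_, ?_, ?_⟩
  · intro γ
    by_cases h : γ ∈ G
    · obtain ⟨i, t, ht, hte, hφγ⟩ := mainG γ h
      by_cases hi : i ∈ J
      · rw [hφγ, if_pos hi]
        exact Set.mem_insert_of_mem _ ⟨i, hi, t, ht, hte⟩
      · rw [hφγ, if_neg hi]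
        obtain ⟨j, hj, u, hu, hue⟩ := hf i hi
        refine Set.mem_insert_of_mem _ ⟨j, hj, t + u, S.add_mem ht hu, ?_⟩
        simp [hue]
    · rw [hnotG γ h]; exact Set.mem_insert _ _
  · rintro x (rfl | hx)
    · exact hnotG 0 hG0
    · exact hX1id x hx
  · intro γ s hs
    by_cases h : γ ∈ G
    · obtain ⟨i, t, ht, hte, hφγ⟩ := mainG γ h
      have hst : φ ((s + t) (e i)) = if i ∈ J then (s + t) (e i) else (s + t) (f i) :=
        main (s + t) (S.add_mem hs ht) i
      simp only [AddAut.add_apply, hte] at hst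
      rw [hst, hφγ]
      by_cases hi : i ∈ J <;> simp [hi]
    · have hsg : s γ ∉ G := by
        intro hc
        exact h (by simpa using hSG (-s) (S.neg_mem hs) _ hc)
      rw [hnotG _ hsg, hnotG _ h]
      simp
  · intro s hs x hx hsx
    exact hfpfG s hs x (hX1G x hx) hsx
  · rintro s hs x ⟨j, hj, t, ht, rfl⟩
    exact ⟨j, hj, s + t, S.add_mem hs ht, by simp⟩
end

section
/- Let p ≠ q be primes with p ∤ (q−1) and q ∤ (p−1), let Γ = ℤ_{pq}, S = Aut(Γ,+), and G = S(1) the orbit of 1 (the set of units of ℤ_{pq}). Then S acts without fixed points on G, |G| = (p−1)(q−1), and Γ₀ := Γ \ G is not a union of cosets of any nontrivial subgroup of Γ (i.e., no nontrivial subgroup I of ℤ_{pq} satisfies Γ₀ = ∪_{δ∈Γ₀} (δ + I)). -/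
section aux
variable {n : ℕ} [NeZero n]

lemma addAut_apply (s : AddAut (ZMod n)) (x : ZMod n) : s x = x * s 1 := by
  conv_lhs => rw [← ZMod.natCast_rightInverse x]
  rw [show ((x.val : ℕ) : ZMod n) = (x.val : ℕ) • (1 : ZMod n) by simp,
    map_nsmul, nsmul_eq_mul, ZMod.natCast_rightInverse x]

lemma mem_orbit_iff (γ : ZMod n) :
    (∃ s : AddAut (ZMod n), s 1 = γ) ↔ IsUnit γ := by
  constructor
  · rintro ⟨s, rfl⟩
    have h : (-s) 1 * s 1 = 1 := by
      have := addAut_apply s ((-s) 1)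
      simpa using this.symm
    exact IsUnit.of_mul_eq_one _ (mul_comm ((-s) 1) (s 1) ▸ h)
  · rintro ⟨u, rfl⟩
    exact ⟨AddAut.mulLeft u, by simp [Units.smul_def]⟩

lemma orbit_set_eq : {γ : ZMod n | ∃ s : AddAut (ZMod n), s 1 = γ} = {γ | IsUnit γ} :=
  Set.ext fun γ => mem_orbit_iff γ

lemma card_isUnit_set : Nat.card {γ : ZMod n | IsUnit γ} = Nat.totient n := by
  rw [← ZMod.card_units_eq_totient n, ← Nat.card_eq_fintype_card]
  refine Nat.card_congr (Equiv.ofBijective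
    (fun g : {γ : ZMod n | IsUnit γ} => g.2.unit) ⟨?_, ?_⟩)
  · intro a b hab
    ext
    have := congrArg (Units.val) hab
    simpa using this
  · intro u
    exact ⟨⟨u, u.isUnit⟩, by ext; simp⟩
end aux

/-- For distinct primes `p, q` with `p ∤ q-1` and `q ∤ p-1`,
`Γ = ℤ_{pq}`, `S = Aut(Γ,+)` and `G = S(1)` the orbit of `1`: `S` acts without
fixed points on `G`, `|G| = (p-1)(q-1)`, and `Γ₀ = Γ \ G` is not a union of
cosets of any nontrivial subgroup of `Γ`. -/
theorem stmt_17 (p q : ℕ) (hp : p.Prime) (hq : q.Prime) (hpq : p ≠ q)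
    (hpq1 : ¬ p ∣ (q - 1)) (hqp1 : ¬ q ∣ (p - 1)) :
    letI G : Set (ZMod (p * q)) := {γ | ∃ s : AddAut (ZMod (p * q)), s 1 = γ}
    -- S acts without fixed points on G:
    (∀ s : AddAut (ZMod (p * q)), ∀ g ∈ G, s g = g → s = 0) ∧
    -- |G| = (p-1)(q-1):
    (Nat.card G = (p - 1) * (q - 1)) ∧
    -- Γ₀ = Γ \ G is not a union of cosets of a nontrivial subgroup:
    (∀ I : AddSubgroup (ZMod (p * q)), I ≠ ⊥ → I ≠ ⊤ →
      ¬ ({γ : ZMod (p * q) | γ ∉ G}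
          = ⋃ δ ∈ {γ : ZMod (p * q) | γ ∉ G},
              (fun i : ZMod (p * q) => δ + i) '' (I : Set (ZMod (p * q))))) := by
  have hn : NeZero (p * q) := ⟨Nat.mul_ne_zero hp.pos.ne' hq.pos.ne'⟩
  have hcop : Nat.Coprime p q := (Nat.coprime_primes hp hq).mpr hpq
  refine ⟨?_, ?_, ?_⟩
  · rintro s g ⟨t, rfl⟩ hfix
    have hu : IsUnit (t 1) := (mem_orbit_iff _).mp ⟨t, rfl⟩
    rw [addAut_apply s (t 1)] at hfix
    have h1 : s 1 = 1 := by
      rcases hu with ⟨u, hu⟩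
      have := congrArg (fun x => (↑u⁻¹ : ZMod (p*q)) * x) hfix
      simp only [← hu, ← mul_assoc, Units.inv_mul, one_mul] at this
      exact this
    ext x
    rw [addAut_apply s x, h1, mul_one]; rfl
  · rw [show {γ : ZMod (p*q) | ∃ s : AddAut (ZMod (p * q)), s 1 = γ} = {γ | IsUnit γ}
      from orbit_set_eq, card_isUnit_set, Nat.totient_mul hcop, Nat.totient_prime hp, Nat.totient_prime hq]
  · intro I hbot htop h
    simp only [Set.mem_setOf_eq, mem_orbit_iff] at h
    -- Step 1: find p ∈ I or q ∈ I
    have key : ((p : ZMod (p * q)) ∈ I ∧ ¬ IsUnit ((q : ℕ) : ZMod (p*q))) ∨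
        ((q : ZMod (p * q)) ∈ I ∧ ¬ IsUnit ((p : ℕ) : ZMod (p*q))) := by
      obtain ⟨x, hxI, hx0⟩ : ∃ x ∈ I, x ≠ 0 := by
        by_contra hc
        push_neg at hc
        exact hbot (le_antisymm (fun x hx => hc x hx) bot_le)
      set k := x.val with hk
      have hkx : ((k : ℕ) : ZMod (p * q)) = x := ZMod.natCast_rightInverse x
      have hk0 : k ≠ 0 := fun hzero => hx0 (by rw [← hkx, hzero, Nat.cast_zero])
      have hklt : k < p * q := ZMod.val_lt x
      set d := Nat.gcd k (p * q) with hd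
      have hdI : ((d : ℕ) : ZMod (p * q)) ∈ I := by
        have hbez : (d : ℤ) = k * Nat.gcdA k (p*q) + (p*q) * Nat.gcdB k (p*q) :=
          Nat.gcd_eq_gcd_ab k (p * q)
        have hz : ((d : ℤ) : ZMod (p*q)) = (Nat.gcdA k (p*q)) • x := by
          rw [hbez]
          push_cast
          rw [← Nat.cast_mul, ZMod.natCast_self, zero_mul, add_zero, hkx, zsmul_eq_mul]
          ring
        rw [show ((d : ℕ) : ZMod (p*q)) = ((d : ℤ) : ZMod (p*q)) by push_cast; ring, hz]
        exact AddSubgroup.zsmul_mem I hxI _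
      have hdpq : d ∣ p * q := Nat.gcd_dvd_right _ _
      have hdk : d ∣ k := Nat.gcd_dvd_left _ _
      rcases hp.eq_one_or_self_of_dvd (Nat.gcd d p) (Nat.gcd_dvd_right d p) with h1 | h1 <;>
        rcases hq.eq_one_or_self_of_dvd (Nat.gcd d q) (Nat.gcd_dvd_right d q) with h2 | h2
      · -- d coprime to both, d = 1, I = ⊤
        exfalso
        have hd1 : d = 1 := Nat.Coprime.eq_one_of_dvd (Nat.Coprime.mul_right h1 h2) hdpq
        have h1I : (1 : ZMod (p*q)) ∈ I := by
          have := hdI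
          rw [hd1] at this
          simpa using this
        apply htop
        rw [eq_top_iff]
        intro y _
        have hy : ((y.val : ℕ) : ZMod (p*q)) ∈ I := by
          rw [show ((y.val : ℕ) : ZMod (p*q)) = (y.val : ℕ) • (1 : ZMod (p*q)) by simp]
          exact AddSubgroup.nsmul_mem I h1I _
        rwa [ZMod.natCast_rightInverse y] at hy
      · -- q ∣ d, p coprime to d: d = q
        have hqd : q ∣ d := h2 ▸ Nat.gcd_dvd_left d q
        have hcop_dp : Nat.Coprime d p := h1
        have hdq : d ∣ q := hcop_dp.dvd_of_dvd_mul_left (Nat.mul_comm p q ▸ hdpq)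
        have hdval : d = q := Nat.dvd_antisymm hdq hqd
        rw [hdval] at hdI
        refine Or.inr ⟨hdI, ?_⟩
        rw [ZMod.isUnit_iff_coprime]
        intro hc
        rw [Nat.Coprime, Nat.gcd_eq_left (dvd_mul_right p q)] at hc
        exact hp.one_lt.ne' hc
      · -- p ∣ d, q coprime to d: d = p
        have hpd : p ∣ d := h1 ▸ Nat.gcd_dvd_left d p
        have hcop_dq : Nat.Coprime d q := h2
        have hdp : d ∣ p := hcop_dq.dvd_of_dvd_mul_right hdpq
        have hdval : d = p := Nat.dvd_antisymm hdp hpd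
        rw [hdval] at hdI
        refine Or.inl ⟨hdI, ?_⟩
        rw [ZMod.isUnit_iff_coprime]
        intro hc
        rw [Nat.Coprime, Nat.gcd_eq_left (dvd_mul_left q p)] at hc
        exact hq.one_lt.ne' hc
      · -- p ∣ d and q ∣ d ⇒ pq ∣ k < pq, contradiction
        exfalso
        have hpd : p ∣ d := h1 ▸ Nat.gcd_dvd_left d p
        have hqd : q ∣ d := h2 ▸ Nat.gcd_dvd_left d q
        have hmul : p * q ∣ d := Nat.Coprime.mul_dvd_of_dvd_of_dvd hcop hpd hqd
        exact absurd hklt (not_lt.mpr (Nat.le_of_dvd (Nat.pos_of_ne_zero hk0) (hmul.trans hdk)))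
    -- Step 2: derive contradiction
    rcases key with ⟨hpI, hqu⟩ | ⟨hqI, hpu⟩
    · have hmem : ((q : ZMod (p*q)) + (p : ZMod (p*q))) ∈
          ⋃ δ, ⋃ (_ : ¬ IsUnit δ),
            (fun i : ZMod (p * q) => δ + i) '' (I : Set (ZMod (p * q))) :=
        Set.mem_iUnion.mpr ⟨(q : ZMod (p*q)), Set.mem_iUnion.mpr
          ⟨hqu, ⟨(p : ZMod (p*q)), hpI, rfl⟩⟩⟩
      rw [← h] at hmem
      apply hmem
      rw [show ((q : ZMod (p*q)) + (p : ZMod (p*q))) = (((q + p : ℕ)) : ZMod (p*q)) by push_cast; ring,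
        ZMod.isUnit_iff_coprime]
      have h1 : Nat.Coprime (q + p) p := by
        rw [Nat.coprime_add_self_left]
        exact (Nat.coprime_primes hq hp).mpr hpq.symm
      have h2 : Nat.Coprime (q + p) q := by
        rw [Nat.coprime_self_add_left]
        exact (Nat.coprime_primes hp hq).mpr hpq
      exact Nat.Coprime.mul_right h1 h2
    · have hmem : ((p : ZMod (p*q)) + (q : ZMod (p*q))) ∈
          ⋃ δ, ⋃ (_ : ¬ IsUnit δ),
            (fun i : ZMod (p * q) => δ + i) '' (I : Set (ZMod (p * q))) :=
        Set.mem_iUnion.mpr ⟨(p : ZMod (p*q)), Set.mem_iUnion.mpr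
          ⟨hpu, ⟨(q : ZMod (p*q)), hqI, rfl⟩⟩⟩
      rw [← h] at hmem
      apply hmem
      rw [show ((p : ZMod (p*q)) + (q : ZMod (p*q))) = (((p + q : ℕ)) : ZMod (p*q)) by push_cast; ring,
        ZMod.isUnit_iff_coprime]
      have h1 : Nat.Coprime (p + q) p := by
        rw [Nat.coprime_self_add_left]
        exact (Nat.coprime_primes hq hp).mpr hpq.symm
      have h2 : Nat.Coprime (p + q) q := by
        rw [Nat.coprime_add_self_left]
        exact (Nat.coprime_primes hp hq).mpr hpq
      exact Nat.Coprime.mul_right h1 h2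
end

section
/- Let (Γ,+) be a group, X = {0} ∪ X₁ ⊆ Γ with X₁ nonempty and 0 ∉ X₁, S ≤ Aut(Γ,+) with S(X) ⊆ X and S acting without fixed points on X₁, and φ : Γ → X with φ|_X = id, φ(0) = 0, and φ∘s = s∘φ for all s ∈ S. Let M_S be a dense subnear-ring of M₀(X,Γ,φ,S), and make Γ an M_S-group via m ⊙ γ := m(φ(γ)). Then Γ is a faithful M_S-group, and for Γ₀ := {γ | φ(γ) = 0}: M_S ⊙ δ = {0} for δ ∈ Γ₀ and M_S ⊙ γ = Γ for γ ∈ Γ \ Γ₀. -/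
/-- If `M_S` is a dense subnear-ring of `M₀(X,Γ,φ,S)` and `Γ` is
made an `M_S`-group via `m ⊙ γ := m(φ(γ))`, then `Γ` is a faithful `M_S`-group
with `M_S ⊙ δ = {0}` for `δ ∈ Γ₀` and `M_S ⊙ γ = Γ` for `γ ∈ Γ \ Γ₀`. -/
theorem stmt_18 {Γ : Type*} [AddGroup Γ]
    (X₁ : Set Γ) (hX₁ne : X₁.Nonempty) (h0X₁ : (0 : Γ) ∉ X₁)
    (S : AddSubgroup (AddAut Γ))
    (hSX : ∀ s ∈ S, ∀ x ∈ insert (0 : Γ) X₁, s x ∈ insert (0 : Γ) X₁)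
    (hfpf : ∀ s ∈ S, ∀ x ∈ X₁, s x = x → s = 0)
    (φ : Γ → Γ) (hφX : ∀ γ : Γ, φ γ ∈ insert (0 : Γ) X₁)
    (hφid : ∀ x ∈ insert (0 : Γ) X₁, φ x = x) (hφ0 : φ 0 = 0)
    (hφS : ∀ γ : Γ, ∀ s ∈ S, φ (s γ) = s (φ γ))
    -- the sandwich centralizer near-ring M₀(X,Γ,φ,S):
    (M₀ : Set ((insert (0 : Γ) X₁ : Set Γ) → Γ))
    (hM₀ : M₀ = {f | f ⟨0, Set.mem_insert 0 X₁⟩ = 0 ∧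
      ∀ s : AddAut Γ, ∀ hs : s ∈ S, ∀ x : (insert (0 : Γ) X₁ : Set Γ),
        f ⟨s x, hSX s hs x x.2⟩ = s (f x)})
    -- M_S is a subnear-ring of M₀(X,Γ,φ,S):
    (MS : Set ((insert (0 : Γ) X₁ : Set Γ) → Γ)) (hMS : MS ⊆ M₀)
    (hMS0 : 0 ∈ MS)
    (hMSadd : ∀ f ∈ MS, ∀ g ∈ MS, f + g ∈ MS)
    (hMSneg : ∀ f ∈ MS, -f ∈ MS)
    (hMSmul : ∀ f ∈ MS, ∀ g ∈ MS, sandwichMul φ hφX f g ∈ MS)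
    -- M_S is dense in M₀(X,Γ,φ,S):
    (hdense : ∀ T : Finset Γ, ↑T ⊆ insert (0 : Γ) X₁ → ∀ g ∈ M₀,
      ∃ f ∈ MS, ∀ x : (insert (0 : Γ) X₁ : Set Γ), (x : Γ) ∈ T → f x = g x) :
    -- Γ is a faithful M_S-group via m ⊙ γ := m (φ γ):
    (∀ m ∈ MS, (∀ γ : Γ, m ⟨φ γ, hφX γ⟩ = 0) → m = 0) ∧
    -- M_S ⊙ δ = {0} for δ ∈ Γ₀ = {γ | φ γ = 0}:
    (∀ δ : Γ, φ δ = 0 → ∀ m ∈ MS, m ⟨φ δ, hφX δ⟩ = 0) ∧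
    -- M_S ⊙ γ = Γ for γ ∈ Γ \ Γ₀:
    (∀ γ : Γ, φ γ ≠ 0 → ∀ δ : Γ, ∃ m ∈ MS, m ⟨φ γ, hφX γ⟩ = δ) := by

  classical
  refine ⟨?_, ?_, ?_⟩
  · -- faithfulness
    intro m _ h
    funext x
    have hx : (⟨φ (x : Γ), hφX x⟩ : (insert (0 : Γ) X₁ : Set Γ)) = x :=
      Subtype.ext (hφid x x.2)
    have := h x
    rw [hx] at this
    simpa using this
  · -- annihilator part
    intro δ hδ m hm
    have hm0 := (hM₀ ▸ hMS hm).1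
    have hx : (⟨φ δ, hφX δ⟩ : (insert (0 : Γ) X₁ : Set Γ)) =
        ⟨0, Set.mem_insert 0 X₁⟩ := Subtype.ext hδ
    rw [hx]; exact hm0
  · -- transitivity part
    intro γ hγ δ
    set x₀ : Γ := φ γ with hx₀def
    have hx₀X : x₀ ∈ insert (0 : Γ) X₁ := hφX γ
    have hx₀X₁ : x₀ ∈ X₁ := by
      rcases hx₀X with h | h
      · exact absurd h hγ
      · exact h
    -- uniqueness of the transporting automorphism
    have huniq : ∀ s ∈ S, ∀ t ∈ S, s x₀ = t x₀ → s = t := by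
      intro s hs t ht hst
      have hmem : -t + s ∈ S := add_mem (neg_mem ht) hs
      have hfix : (-t + s) x₀ = x₀ := by
        have : (-t : AddAut Γ) (s x₀) = (-t : AddAut Γ) (t x₀) := by rw [hst]
        simpa [AddAut.add_apply] using this
      have := hfpf _ hmem x₀ hx₀X₁ hfix
      have h1 : s = t + 0 := by
        rw [← this]; exact (add_neg_cancel_left t s).symm
      simpa using h1
    -- define g on the orbit of x₀
    set g : (insert (0 : Γ) X₁ : Set Γ) → Γ := fun x =>
      if h : ∃ s : AddAut Γ, s ∈ S ∧ (x : Γ) = s x₀ then h.choose δ else 0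
      with hgdef
    have hgval : ∀ (x : (insert (0 : Γ) X₁ : Set Γ)) (s : AddAut Γ),
        s ∈ S → (x : Γ) = s x₀ → g x = s δ := by
      intro x s hs hxs
      have hex : ∃ s : AddAut Γ, s ∈ S ∧ (x : Γ) = s x₀ := ⟨s, hs, hxs⟩
      have hc := hex.choose_spec
      have : hex.choose = s :=
        huniq _ hc.1 _ hs (by rw [← hc.2, ← hxs])
      simp only [hgdef, dif_pos hex, this]
    have hg0 : g ⟨0, Set.mem_insert 0 X₁⟩ = 0 := by
      have hnex : ¬ ∃ s : AddAut Γ, s ∈ S ∧ (0 : Γ) = s x₀ := by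
        rintro ⟨s, hs, h0⟩
        have : x₀ = 0 := by
          have := congrArg (-s : AddAut Γ) h0
          simpa using this.symm
        exact h0X₁ (this ▸ hx₀X₁)
      simp only [hgdef, dif_neg hnex]
    have hgM₀ : g ∈ M₀ := by
      rw [hM₀]
      refine ⟨hg0, ?_⟩
      intro s hs x
      by_cases hex : ∃ t : AddAut Γ, t ∈ S ∧ (x : Γ) = t x₀
      · obtain ⟨t, ht, hxt⟩ := hex
        have h1 : g x = t δ := hgval x t ht hxt
        have h2 : g ⟨s x, hSX s hs x x.2⟩ = (s + t) δ := by
          refine hgval _ (s + t) (add_mem hs ht) ?_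
          simp [AddAut.add_apply, hxt]
        rw [h1, h2, AddAut.add_apply]
      · have hnex2 : ¬ ∃ t : AddAut Γ, t ∈ S ∧ (s x : Γ) = t x₀ := by
          rintro ⟨t, ht, hst⟩
          exact hex ⟨-s + t, add_mem (neg_mem hs) ht, by
            have := congrArg (-s : AddAut Γ) hst
            simpa [AddAut.add_apply] using this⟩
        have h1 : g x = 0 := by simp only [hgdef, dif_neg hex]
        have h2 : g ⟨s x, hSX s hs x x.2⟩ = 0 := by
          simp only [hgdef]; exact dif_neg hnex2
        rw [h1, h2, map_zero]
    obtain ⟨f, hfMS, hf⟩ := hdense {x₀} (by simpa using hx₀X) g hgM₀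
    refine ⟨f, hfMS, ?_⟩
    have hgx₀ : g ⟨x₀, hx₀X⟩ = δ := by
      have := hgval ⟨x₀, hx₀X⟩ 0 (zero_mem S) (by simp)
      simpa using this
    have := hf ⟨x₀, hx₀X⟩ (by simp)
    rw [this, hgx₀]
end
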